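/- Let k be a finite field, ψ a nontrivial additive character, and χ'_1 a nontrivial multiplicative character of k*. Suppose the nonconfluence condition holds for the matrix (w_{ij}) with witness (c_1,…,c_n) and C ∈ GL(n,ℤ) as above, with all transformed values ∑_j x_j s_2^{w'_{2j}}⋯s_n^{w'_{nj}} nonzero for every (s_2,…,s_n) ∈ (k*)^{n-1}. Then the GKZ hypergeometric sum factors as Hyp_ψ(x; χ_1,…,χ_n) = g(χ'_1,ψ) · ∑_{s_2,…,s_n ∈ k*} χ'_2(s_2)⋯χ'_n(s_n) χ'_1^{-1}(∑_j x_j s_2^{w'_{2j}}⋯s_n^{w'_{nj}}), where g(χ'_1,ψ) is the Gauss sum. -/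

import Mathlib

open Finset

section helpers

variable {G : Type*} [CommGroup G]

private lemma zpow_sum' {ι : Type*} (a : G) (s : Finset ι) (f : ι → ℤ) :
    a ^ (∑ i ∈ s, f i) = ∏ i ∈ s, a ^ f i := by
  induction s using Finset.cons_induction with
  | empty => simp
  | cons i s hi ih => rw [Finset.sum_cons, Finset.prod_cons, zpow_add, ih]

variable {M : ℕ}

private def expM (A : Matrix (Fin M) (Fin M) ℤ) (u : Fin M → G) : Fin M → G :=
  fun i => ∏ m, u m ^ A m i

private lemma expM_expM (A B : Matrix (Fin M) (Fin M) ℤ) (u : Fin M → G) :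
    expM A (expM B u) = expM (B * A) u := by
  funext i
  simp only [expM]
  calc (∏ m, (∏ l, u l ^ B l m) ^ A m i)
      = ∏ m, ∏ l, u l ^ (B l m * A m i) := by
        refine Finset.prod_congr rfl fun m _ => ?_
        rw [← Finset.prod_zpow]
        exact Finset.prod_congr rfl fun l _ => (zpow_mul _ _ _).symm
    _ = ∏ l, u l ^ ((B * A) l i) := by
        rw [Finset.prod_comm]
        refine Finset.prod_congr rfl fun l _ => ?_
        rw [Matrix.mul_apply, zpow_sum']

private lemma expM_one (u : Fin M → G) : expM (1 : Matrix (Fin M) (Fin M) ℤ) u = u := by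
  funext i
  rw [expM, Finset.prod_eq_single i (fun m _ hm => by simp [Matrix.one_apply_ne hm])
    (by simp)]
  simp [Matrix.one_apply_eq]

private def expEquiv (A : Matrix (Fin M) (Fin M) ℤ) [Invertible A] :
    (Fin M → G) ≃ (Fin M → G) where
  toFun := expM A
  invFun := expM (⅟A)
  left_inv u := by rw [expM_expM, mul_invOf_self, expM_one]
  right_inv u := by rw [expM_expM, invOf_mul_self, expM_one]

private lemma expEquiv_apply (A : Matrix (Fin M) (Fin M) ℤ) [Invertible A] (u : Fin M → G) :
    expEquiv A u = expM A u := rfl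

private lemma val_prod {R : Type*} [CommMonoid R] {ι : Type*} (s : Finset ι) (f : ι → Rˣ) :
    ((∏ i ∈ s, f i : Rˣ) : R) = ∏ i ∈ s, (f i : R) :=
  map_prod (Units.coeHom R) f s

end helpers

/-- Under the nonconfluence condition, if the transformed Laurent polynomial
G(s₂,…,sₙ) = ∑ⱼ xⱼ s₂^{w'₂ⱼ}⋯sₙ^{w'ₙⱼ} never vanishes on the torus and
χ'₁ = ∏ₗ χₗ^{c_l} is nontrivial, then the GKZ hypergeometric sum factors as the
Gauss sum g(χ'₁,ψ) times a purely multiplicative character sum. -/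
theorem stmt12 {k : Type*} [Field k] [Fintype k] [DecidableEq k]
    (n N : ℕ) (ψ : AddChar k ℂ) (hψ : ψ ≠ 1)
    (χ : Fin (n + 1) → MulChar k ℂ)
    (W : Matrix (Fin (n + 1)) (Fin N) ℤ)
    (C : Matrix (Fin (n + 1)) (Fin (n + 1)) ℤ)
    (hC : IsUnit C.det)
    (hrow : ∀ j, ∑ i, C 0 i * W i j = 1)
    (hχ'₁ : (∏ l, χ l ^ C 0 l) ≠ 1)
    (x : Fin N → k)
    (hG : ∀ s : Fin n → kˣ,
      (∑ j, x j * ∏ m : Fin n, ((s m ^ (∑ i, C m.succ i * W i j) : kˣ) : k)) ≠ 0) :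
    (∑ t : Fin (n + 1) → kˣ, (∏ i, χ i (t i : k)) *
        ψ (∑ j, x j * ∏ i, ((t i ^ W i j : kˣ) : k)))
      =
    (∑ u : kˣ, (∏ l, χ l ^ C 0 l) (u : k) * ψ (u : k)) *
    ∑ s : Fin n → kˣ,
      (∏ m : Fin n, (∏ l, χ l ^ C m.succ l) (s m : k)) *
      (∏ l, χ l ^ C 0 l)⁻¹
        (∑ j, x j * ∏ m : Fin n, ((s m ^ (∑ i, C m.succ i * W i j) : kˣ) : k)) := by
  classical
  haveI : Invertible C := C.invertibleOfIsUnitDet hC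
  set Φ : MulChar k ℂ ≃* (kˣ →* ℂˣ) := MulChar.mulEquivToUnitHom with hΦdef
  have hcoe : ∀ (χ₀ : MulChar k ℂ) (u : kˣ), χ₀ (u : k) = ((Φ χ₀) u : ℂ) := fun χ₀ u =>
    (MulChar.coe_equivToUnitHom χ₀ u).symm
  set χ' : Fin (n + 1) → MulChar k ℂ := fun m => ∏ l, χ l ^ C m l with hχ'def
  set Gf : (Fin n → kˣ) → k := fun s =>
    ∑ j, x j * ∏ m : Fin n, ((s m ^ (∑ i, C m.succ i * W i j) : kˣ) : k) with hGdef
  -- Claim A: transformation of the character product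
  have hA : ∀ u : Fin (n+1) → kˣ,
      (∏ i, χ i ((expM C u) i : k)) = ∏ m, χ' m ((u m : k)) := by
    intro u
    have l1 : ∀ i : Fin (n+1), Φ (χ i) (expM C u i) = ∏ m, (Φ (χ i) (u m)) ^ C m i := by
      intro i
      rw [expM, map_prod]
      exact Finset.prod_congr rfl fun m _ => map_zpow _ _ _
    have l2 : ∀ m : Fin (n+1), Φ (χ' m) (u m) = ∏ l, (Φ (χ l) (u m)) ^ C m l := by
      intro m
      have h1 : Φ (χ' m) = ∏ l, (Φ (χ l)) ^ C m l := by
        rw [hχ'def, map_prod]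
        exact Finset.prod_congr rfl fun l _ => by have := map_zpow Φ (χ l) (C m l); exact this
      rw [h1, MonoidHom.finset_prod_apply]
      exact Finset.prod_congr rfl fun l _ => rfl
    calc (∏ i, χ i ((expM C u) i : k))
        = ∏ i, ((Φ (χ i) (expM C u i) : ℂˣ) : ℂ) :=
          Finset.prod_congr rfl fun i _ => hcoe _ _
      _ = ((∏ i, Φ (χ i) (expM C u i) : ℂˣ) : ℂ) := (val_prod _ _).symm
      _ = ((∏ m, ∏ l, (Φ (χ l) (u m)) ^ C m l : ℂˣ) : ℂ) := by
          congr 1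
          rw [← Finset.prod_comm]
          exact Finset.prod_congr rfl fun i _ => l1 i
      _ = ∏ m, ((∏ l, (Φ (χ l) (u m)) ^ C m l : ℂˣ) : ℂ) := val_prod _ _
      _ = ∏ m, χ' m ((u m : k)) :=
          Finset.prod_congr rfl fun m _ => by rw [hcoe, l2]
  -- Claim B: transformation of the monomials
  have hB : ∀ (u : Fin (n+1) → kˣ) (j : Fin N),
      (∏ i, (expM C u i) ^ W i j) = ∏ m, u m ^ (∑ i, C m i * W i j) := by
    intro u j
    calc (∏ i, (expM C u i) ^ W i j)
        = ∏ i, ∏ m, u m ^ (C m i * W i j) := by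
          refine Finset.prod_congr rfl fun i _ => ?_
          rw [expM, ← Finset.prod_zpow]
          exact Finset.prod_congr rfl fun m _ => (zpow_mul _ _ _).symm
      _ = ∏ m, u m ^ (∑ i, C m i * W i j) := by
          rw [Finset.prod_comm]
          exact Finset.prod_congr rfl fun m _ => (zpow_sum' _ _ _).symm
  -- Claim: the argument of ψ
  have hArg : ∀ u : Fin (n+1) → kˣ,
      (∑ j, x j * ∏ i, ((expM C u i ^ W i j : kˣ) : k)) =
      (u 0 : k) * Gf (fun m => u m.succ) := by
    intro u
    rw [hGdef]
    dsimp only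
    rw [Finset.mul_sum]
    refine Finset.sum_congr rfl fun j _ => ?_
    have h1 : (∏ i, ((expM C u i ^ W i j : kˣ) : k)) =
        (u 0 : k) * ∏ m : Fin n, ((u m.succ ^ (∑ i, C m.succ i * W i j) : kˣ) : k) := by
      rw [← val_prod, hB, Fin.prod_univ_succ, hrow j, zpow_one, Units.val_mul, val_prod]
    rw [h1]; ring
  -- Gauss-sum substitution for each fixed s
  have hGauss : ∀ s : Fin n → kˣ,
      (∑ a : kˣ, χ' 0 (a : k) * ψ ((a : k) * Gf s)) =
      (χ' 0)⁻¹ (Gf s) * ∑ u : kˣ, χ' 0 (u : k) * ψ (u : k) := by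
    intro s
    set a0 : kˣ := Units.mk0 (Gf s) (hG s) with ha0
    have hval : (a0 : k) = Gf s := rfl
    rw [← Equiv.sum_comp (Equiv.mulRight a0⁻¹)
      (fun v => χ' 0 (v : k) * ψ ((v : k) * Gf s))]
    have step : ∀ w : kˣ,
        χ' 0 ((Equiv.mulRight a0⁻¹ w : kˣ) : k) *
          ψ (((Equiv.mulRight a0⁻¹ w : kˣ) : k) * Gf s) =
        (χ' 0)⁻¹ (Gf s) * (χ' 0 (w : k) * ψ (w : k)) := by
      intro w
      have e1 : ((Equiv.mulRight a0⁻¹ w : kˣ) : k) = (w : k) * (Gf s)⁻¹ := by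
        show ((w * a0⁻¹ : kˣ) : k) = _
        rw [Units.val_mul, Units.val_inv_eq_inv_val, hval]
      rw [e1]
      have e2 : (w : k) * (Gf s)⁻¹ * Gf s = (w : k) := by
        rw [mul_assoc, inv_mul_cancel₀ (hG s), mul_one]
      rw [e2, map_mul, ← MulChar.inv_apply']
      ring
    rw [Finset.sum_congr rfl fun w _ => step w, ← Finset.mul_sum]
  -- Main computation
  calc (∑ t : Fin (n + 1) → kˣ, (∏ i, χ i (t i : k)) *
        ψ (∑ j, x j * ∏ i, ((t i ^ W i j : kˣ) : k)))
      = ∑ u : Fin (n+1) → kˣ, (∏ m, χ' m ((u m : k))) *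
          ψ ((u 0 : k) * Gf (fun m => u m.succ)) := by
        rw [← Equiv.sum_comp (expEquiv (G := kˣ) C)
          (fun t => (∏ i, χ i (t i : k)) * ψ (∑ j, x j * ∏ i, ((t i ^ W i j : kˣ) : k)))]
        refine Finset.sum_congr rfl fun u _ => ?_
        rw [expEquiv_apply, hA u, hArg u]
    _ = ∑ a : kˣ, ∑ s : Fin n → kˣ,
          (χ' 0 (a : k) * ∏ m : Fin n, χ' m.succ ((s m : k))) * ψ ((a : k) * Gf s) := by
        rw [← Equiv.sum_comp (Fin.consEquiv (fun _ => kˣ))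
          (fun u => (∏ m, χ' m ((u m : k))) * ψ ((u 0 : k) * Gf (fun m => u m.succ))),
          Fintype.sum_prod_type]
        refine Finset.sum_congr rfl fun a _ => Finset.sum_congr rfl fun s _ => ?_
        have hc : (Fin.consEquiv (fun _ : Fin (n+1) => kˣ)) (a, s) = Fin.cons a s := rfl
        rw [hc, Fin.prod_univ_succ]
        simp only [Fin.cons_zero, Fin.cons_succ]
    _ = ∑ s : Fin n → kˣ, (∏ m : Fin n, χ' m.succ ((s m : k))) *
          ∑ a : kˣ, χ' 0 (a : k) * ψ ((a : k) * Gf s) := by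
        rw [Finset.sum_comm]
        refine Finset.sum_congr rfl fun s _ => ?_
        rw [Finset.mul_sum]
        exact Finset.sum_congr rfl fun a _ => by ring
    _ = ∑ s : Fin n → kˣ, (∏ m : Fin n, χ' m.succ ((s m : k))) *
          ((χ' 0)⁻¹ (Gf s) * ∑ u : kˣ, χ' 0 (u : k) * ψ (u : k)) := by
        exact Finset.sum_congr rfl fun s _ => by rw [hGauss s]
    _ = (∑ u : kˣ, (∏ l, χ l ^ C 0 l) (u : k) * ψ (u : k)) *
        ∑ s : Fin n → kˣ,
          (∏ m : Fin n, (∏ l, χ l ^ C m.succ l) (s m : k)) *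
          (∏ l, χ l ^ C 0 l)⁻¹
            (∑ j, x j * ∏ m : Fin n, ((s m ^ (∑ i, C m.succ i * W i j) : kˣ) : k)) := by
        rw [Finset.mul_sum]
        refine Finset.sum_congr rfl fun s _ => ?_
        rw [hχ'def, hGdef]
        ring
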